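/- (One-step prediction error inequality from the proof of Theorem 3.4.) Let A, Â ∈ ℂ^{n×n} be Hermitian, τ > 0, and C ≥ 0 a constant such that ‖(A − Â) v‖₂ ≤ C ‖v‖₂ for all v ∈ ℂⁿ. Suppose vectors u, u', x, x', b ∈ ℂⁿ satisfy i (u' − u)/τ = Â ((u' + u)/2) + b and x' = (I + i(τ/2)A)⁻¹ (I − i(τ/2)A) x. Then, writing e = u − x and e' = u' − x', ‖e'‖₂ ≤ ‖e‖₂ + (τ/2) C (‖x‖₂ + ‖x'‖₂) + τ ‖b‖₂. -/

import Mathlib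

open Matrix

/-- The Euclidean (2-)norm of a vector in `ℂⁿ`: `‖x‖₂ = (∑ k |x_k|²)^{1/2}`. -/
noncomputable def euclNorm {n : ℕ} (v : Fin n → ℂ) : ℝ :=
  Real.sqrt (∑ k, ‖v k‖ ^ 2)

noncomputable def toE {n : ℕ} (v : Fin n → ℂ) : EuclideanSpace ℂ (Fin n) :=
  (WithLp.equiv 2 (Fin n → ℂ)).symm v

lemma euclNorm_eq {n : ℕ} (v : Fin n → ℂ) : euclNorm v = ‖toE v‖ := by
  simp [euclNorm, EuclideanSpace.norm_eq, toE, WithLp.equiv_symm_apply, PiLp.toLp_apply]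

lemma keynorm {n : ℕ} (H : Matrix (Fin n) (Fin n) ℂ) (hH : H.IsHermitian) (c : ℝ)
    (v : Fin n → ℂ) :
    ‖toE (((1 : Matrix (Fin n) (Fin n) ℂ) + (Complex.I * (c : ℂ)) • H) *ᵥ v)‖ ^ 2
      = ‖toE v‖ ^ 2 + c ^ 2 * ‖toE (H *ᵥ v)‖ ^ 2 := by
  have expand : ((1 : Matrix (Fin n) (Fin n) ℂ) + (Complex.I * (c : ℂ)) • H) *ᵥ v
      = v + (Complex.I * (c : ℂ)) • (H *ᵥ v) := by
    simp [Matrix.add_mulVec, Matrix.one_mulVec, Matrix.smul_mulVec]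
  rw [expand]
  have htoE : toE (v + (Complex.I * (c : ℂ)) • (H *ᵥ v))
      = toE v + (Complex.I * (c : ℂ)) • toE (H *ᵥ v) := by
    simp [toE, WithLp.equiv_symm_apply, WithLp.toLp_add, WithLp.toLp_smul]
  rw [htoE, @norm_add_sq ℂ]
  have him : (inner ℂ (toE v) (toE (H *ᵥ v)) : ℂ).im = 0 := by
    have hsym := (Matrix.isHermitian_iff_isSymmetric.1 hH)
    have hTE : toE (H *ᵥ v) = Matrix.toEuclideanLin H (toE v) :=
      (Matrix.toEuclideanLin_apply_piLp_toLp H v).symm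
    have h1 : (starRingEnd ℂ) (inner ℂ (toE v) (toE (H *ᵥ v)) : ℂ)
        = inner ℂ (toE v) (toE (H *ᵥ v)) := by
      rw [hTE, inner_conj_symm]
      exact hsym (toE v) (toE v)
    have := Complex.conj_eq_iff_im.mp h1
    exact this
  rw [inner_smul_right]
  simp only [RCLike.re_to_complex, Complex.mul_re, Complex.mul_im, Complex.I_re, Complex.I_im,
    Complex.ofReal_re, Complex.ofReal_im, him]
  have hns : ‖(Complex.I * (c : ℂ)) • toE (H *ᵥ v)‖ ^ 2 = c ^ 2 * ‖toE (H *ᵥ v)‖ ^ 2 := by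
    rw [norm_smul]
    simp [mul_pow, Complex.sq_norm, sq_abs]
  rw [hns]; ring

lemma norm_le_mulVec {n : ℕ} (H : Matrix (Fin n) (Fin n) ℂ) (hH : H.IsHermitian) (c : ℝ)
    (v : Fin n → ℂ) :
    ‖toE v‖ ≤ ‖toE (((1 : Matrix (Fin n) (Fin n) ℂ) + (Complex.I * (c : ℂ)) • H) *ᵥ v)‖ := by
  have h := keynorm H hH c v
  nlinarith [norm_nonneg (toE v), norm_nonneg (toE (((1 : Matrix (Fin n) (Fin n) ℂ) + (Complex.I * (c : ℂ)) • H) *ᵥ v)), sq_nonneg (c * ‖toE (H *ᵥ v)‖), sq_nonneg c, sq_nonneg (‖toE (H *ᵥ v)‖)]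

lemma isUnit_one_add {n : ℕ} (H : Matrix (Fin n) (Fin n) ℂ) (hH : H.IsHermitian) (c : ℝ) :
    IsUnit ((1 : Matrix (Fin n) (Fin n) ℂ) + (Complex.I * (c : ℂ)) • H) := by
  rw [← Matrix.mulVec_injective_iff_isUnit]
  intro v w h
  have h0 : ((1 : Matrix (Fin n) (Fin n) ℂ) + (Complex.I * (c : ℂ)) • H) *ᵥ (v - w) = 0 := by
    rw [Matrix.mulVec_sub, h, sub_self]
  have h1 := norm_le_mulVec H hH c (v - w)
  rw [h0] at h1
  have h2 : toE (v - w) = 0 := by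
    have : ‖toE (v - w)‖ = 0 := le_antisymm (by simpa [toE, WithLp.equiv_symm_apply, WithLp.toLp_zero] using h1) (norm_nonneg _)
    exact norm_eq_zero.mp this
  have h3 : v - w = 0 := by
    have := (WithLp.equiv 2 (Fin n → ℂ)).symm.injective (a₁ := v - w) (a₂ := 0)
    simpa [toE, WithLp.equiv_symm_apply, WithLp.toLp_zero] using this (by simpa [toE, WithLp.equiv_symm_apply, WithLp.toLp_zero] using h2)
  exact sub_eq_zero.mp h3

lemma inv_bound {n : ℕ} (H : Matrix (Fin n) (Fin n) ℂ) (hH : H.IsHermitian) (c : ℝ)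
    (v : Fin n → ℂ) :
    ‖toE (((1 : Matrix (Fin n) (Fin n) ℂ) + (Complex.I * (c : ℂ)) • H)⁻¹ *ᵥ v)‖ ≤ ‖toE v‖ := by
  set M := (1 : Matrix (Fin n) (Fin n) ℂ) + (Complex.I * (c : ℂ)) • H with hM
  have hdet : IsUnit M.det := (Matrix.isUnit_iff_isUnit_det M).mp (isUnit_one_add H hH c)
  have h := norm_le_mulVec H hH c (M⁻¹ *ᵥ v)
  rwa [← hM, Matrix.mulVec_mulVec, Matrix.mul_nonsing_inv M hdet, Matrix.one_mulVec] at h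

lemma sub_eq_add_neg_mat {n : ℕ} (H : Matrix (Fin n) (Fin n) ℂ) (c : ℝ) :
    (1 : Matrix (Fin n) (Fin n) ℂ) - (Complex.I * (c : ℂ)) • H
      = (1 : Matrix (Fin n) (Fin n) ℂ) + (Complex.I * ((-c : ℝ) : ℂ)) • H := by
  push_cast
  rw [mul_neg, neg_smul, sub_eq_add_neg]

lemma cayley_norm {n : ℕ} (H : Matrix (Fin n) (Fin n) ℂ) (hH : H.IsHermitian) (c : ℝ)
    (w : Fin n → ℂ) :
    ‖toE ((((1 : Matrix (Fin n) (Fin n) ℂ) + (Complex.I * (c : ℂ)) • H)⁻¹ *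
        ((1 : Matrix (Fin n) (Fin n) ℂ) - (Complex.I * (c : ℂ)) • H)) *ᵥ w)‖ = ‖toE w‖ := by
  set M := (1 : Matrix (Fin n) (Fin n) ℂ) + (Complex.I * (c : ℂ)) • H with hMdef
  set N := (1 : Matrix (Fin n) (Fin n) ℂ) - (Complex.I * (c : ℂ)) • H with hNdef
  have hMdet : IsUnit M.det := (Matrix.isUnit_iff_isUnit_det M).mp (isUnit_one_add H hH c)
  have hNdet : IsUnit N.det := by
    rw [hNdef, sub_eq_add_neg_mat]
    exact (Matrix.isUnit_iff_isUnit_det _).mp (isUnit_one_add H hH (-c))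
  have hstar : star (Complex.I * (c : ℂ)) = -(Complex.I * (c : ℂ)) := by
    simp [Complex.ext_iff]
  have hMH : Mᴴ = N := by
    rw [hMdef, hNdef, Matrix.conjTranspose_add, Matrix.conjTranspose_smul,
      Matrix.conjTranspose_one, hH.eq, hstar, neg_smul, ← sub_eq_add_neg]
  have hNH : Nᴴ = M := by
    rw [← hMH, Matrix.conjTranspose_conjTranspose]
  have hcomm : M * N = N * M := by
    rw [hMdef, hNdef]
    generalize (Complex.I * (c : ℂ)) • H = X
    noncomm_ring
  have hUHU : (M⁻¹ * N)ᴴ * (M⁻¹ * N) = 1 := by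
    rw [Matrix.conjTranspose_mul, Matrix.conjTranspose_nonsing_inv, hMH, hNH]
    calc M * N⁻¹ * (M⁻¹ * N) = M * (N⁻¹ * M⁻¹) * N := by
          rw [Matrix.mul_assoc, Matrix.mul_assoc, Matrix.mul_assoc]
      _ = M * (M * N)⁻¹ * N := by rw [Matrix.mul_inv_rev]
      _ = M * (N * M)⁻¹ * N := by rw [hcomm]
      _ = M * (M⁻¹ * N⁻¹) * N := by rw [Matrix.mul_inv_rev]
      _ = (M * M⁻¹) * (N⁻¹ * N) := by
          rw [Matrix.mul_assoc, Matrix.mul_assoc, Matrix.mul_assoc]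
      _ = 1 := by rw [Matrix.mul_nonsing_inv M hMdet, Matrix.nonsing_inv_mul N hNdet, Matrix.one_mul]
  set U := M⁻¹ * N with hUdef
  have hinner : (inner ℂ (toE (U *ᵥ w)) (toE (U *ᵥ w)) : ℂ) = inner ℂ (toE w) (toE w) := by
    have hTE : ∀ (B : Matrix (Fin n) (Fin n) ℂ) (z : Fin n → ℂ),
        toE (B *ᵥ z) = Matrix.toEuclideanLin B (toE z) := fun B z =>
      (Matrix.toEuclideanLin_apply_piLp_toLp B z).symm
    rw [hTE U w]
    rw [← LinearMap.adjoint_inner_right]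
    rw [← Matrix.toEuclideanLin_conjTranspose_eq_adjoint]
    rw [← hTE, ← hTE, Matrix.mulVec_mulVec, hUHU, Matrix.one_mulVec]
  have hre := congrArg (RCLike.re (K := ℂ)) hinner
  have h1 : ‖toE (U *ᵥ w)‖ ^ 2 = ‖toE w‖ ^ 2 := by
    rw [← @inner_self_eq_norm_sq ℂ, ← @inner_self_eq_norm_sq ℂ]
    exact hre
  have h2 := congrArg Real.sqrt h1
  rwa [Real.sqrt_sq (norm_nonneg _), Real.sqrt_sq (norm_nonneg _)] at h2

/-- **one-step prediction error inequality from the proof of Theorem 3.4.**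
Let `A, Â ∈ ℂ^{n×n}` be Hermitian, `τ > 0`, and `C ≥ 0` with `‖(A − Â) v‖₂ ≤ C ‖v‖₂` for
all `v`.  If `i (u' − u)/τ = Â ((u' + u)/2) + b` and
`x' = (I + i(τ/2)A)⁻¹ (I − i(τ/2)A) x`, then with `e = u − x`, `e' = u' − x'`,
`‖e'‖₂ ≤ ‖e‖₂ + (τ/2) C (‖x‖₂ + ‖x'‖₂) + τ ‖b‖₂`. -/
theorem cnDMD_one_step_prediction_estimate (n : ℕ) (A Ahat : Matrix (Fin n) (Fin n) ℂ)
    (hA : A.IsHermitian) (hAhat : Ahat.IsHermitian) (τ : ℝ) (hτ : 0 < τ)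
    (C : ℝ) (hC : 0 ≤ C)
    (hbound : ∀ v : Fin n → ℂ, euclNorm ((A - Ahat).mulVec v) ≤ C * euclNorm v)
    (u u' x x' b : Fin n → ℂ)
    (hu : (Complex.I / (τ : ℂ)) • (u' - u) = Ahat.mulVec ((2 : ℂ)⁻¹ • (u' + u)) + b)
    (hx : x' = ((1 + (Complex.I * ((τ : ℂ) / 2)) • A)⁻¹ *
        (1 - (Complex.I * ((τ : ℂ) / 2)) • A)).mulVec x) :
    euclNorm (u' - x') ≤
      euclNorm (u - x) + (τ / 2) * C * (euclNorm x + euclNorm x') + τ * euclNorm b := by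
  have hτ0 : (τ : ℂ) ≠ 0 := by exact_mod_cast hτ.ne'
  have hs' : Complex.I * ((τ : ℂ) / 2) = Complex.I * (((τ / 2 : ℝ)) : ℂ) := by push_cast; ring
  rw [hs'] at hx
  set c : ℝ := τ / 2 with hc2
  set s : ℂ := Complex.I * (c : ℂ) with hs
  -- invertibility
  have hMdet : IsUnit ((1 : Matrix (Fin n) (Fin n) ℂ) + s • A).det :=
    (Matrix.isUnit_iff_isUnit_det _).mp (isUnit_one_add A hA c)
  have hMhdet : IsUnit ((1 : Matrix (Fin n) (Fin n) ℂ) + s • Ahat).det :=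
    (Matrix.isUnit_iff_isUnit_det _).mp (isUnit_one_add Ahat hAhat c)
  -- step for x
  have hMx : ((1 : Matrix (Fin n) (Fin n) ℂ) + s • A) *ᵥ x'
      = ((1 : Matrix (Fin n) (Fin n) ℂ) - s • A) *ᵥ x := by
    rw [hx, Matrix.mulVec_mulVec, ← Matrix.mul_assoc, Matrix.mul_nonsing_inv _ hMdet,
      Matrix.one_mul]
  -- step for u
  have hu2 : u' - u = (-(Complex.I * (τ : ℂ))) • (Ahat *ᵥ ((2 : ℂ)⁻¹ • (u' + u)) + b) := by
    have hcoe : (-(Complex.I * (τ : ℂ))) * (Complex.I / (τ : ℂ)) = 1 := by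
      field_simp
      rw [Complex.I_sq, neg_neg]
    calc u' - u = ((-(Complex.I * (τ : ℂ))) * (Complex.I / (τ : ℂ))) • (u' - u) := by
          rw [hcoe, one_smul]
      _ = (-(Complex.I * (τ : ℂ))) • ((Complex.I / (τ : ℂ)) • (u' - u)) := by
          rw [mul_smul]
      _ = _ := by rw [hu]
  -- key identity
  have key : ((1 : Matrix (Fin n) (Fin n) ℂ) + s • Ahat) *ᵥ (u' - x')
      = ((1 : Matrix (Fin n) (Fin n) ℂ) - s • Ahat) *ᵥ (u - x)
        + (-(Complex.I * (τ : ℂ))) • b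
        + (-s) • ((Ahat - A) *ᵥ x) + (-s) • ((Ahat - A) *ᵥ x') := by
    funext k
    have h1 := congrFun hu2 k
    have h2 := congrFun hMx k
    have hsval : s = Complex.I * ((τ : ℂ) / 2) := by rw [hs, hc2]; push_cast; ring
    simp only [Matrix.add_mulVec, Matrix.sub_mulVec, Matrix.one_mulVec,
      Matrix.smul_mulVec, Matrix.mulVec_add, Matrix.mulVec_sub, Matrix.mulVec_smul,
      Pi.add_apply, Pi.sub_apply, Pi.smul_apply, Pi.neg_apply, smul_eq_mul,
      hsval] at h1 h2 ⊢
    field_simp at h1 h2 ⊢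
    ring_nf at h1 h2 ⊢
    linear_combination h1 - h2
  -- solve for e'
  have he' : u' - x'
      = (((1 : Matrix (Fin n) (Fin n) ℂ) + s • Ahat)⁻¹ *
          ((1 : Matrix (Fin n) (Fin n) ℂ) - s • Ahat)) *ᵥ (u - x)
        + ((1 : Matrix (Fin n) (Fin n) ℂ) + s • Ahat)⁻¹ *ᵥ ((-(Complex.I * (τ : ℂ))) • b)
        + ((1 : Matrix (Fin n) (Fin n) ℂ) + s • Ahat)⁻¹ *ᵥ ((-s) • ((Ahat - A) *ᵥ x))
        + ((1 : Matrix (Fin n) (Fin n) ℂ) + s • Ahat)⁻¹ *ᵥ ((-s) • ((Ahat - A) *ᵥ x')) := by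
    have h := congrArg (fun v => ((1 : Matrix (Fin n) (Fin n) ℂ) + s • Ahat)⁻¹ *ᵥ v) key
    simp only [Matrix.mulVec_add, Matrix.mulVec_mulVec] at h
    rwa [Matrix.nonsing_inv_mul _ hMhdet, Matrix.one_mulVec] at h
  -- norms
  have hnorm4 : ∀ v w y z : Fin n → ℂ, ‖toE (v + w + y + z)‖ ≤ ‖toE v‖ + ‖toE w‖ + ‖toE y‖ + ‖toE z‖ := by
    intro v w y z
    have h4 : ∀ a b' y' z' : EuclideanSpace ℂ (Fin n),
        ‖a + b' + y' + z'‖ ≤ ‖a‖ + ‖b'‖ + ‖y'‖ + ‖z'‖ := by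
      intro a b' y' z'
      calc ‖a + b' + y' + z'‖ ≤ ‖a + b' + y'‖ + ‖z'‖ := norm_add_le _ _
        _ ≤ (‖a + b'‖ + ‖y'‖) + ‖z'‖ := by gcongr; exact norm_add_le _ _
        _ ≤ ((‖a‖ + ‖b'‖) + ‖y'‖) + ‖z'‖ := by gcongr; exact norm_add_le _ _
    have ht : toE (v + w + y + z) = toE v + toE w + toE y + toE z := by
      simp [toE, WithLp.equiv_symm_apply, WithLp.toLp_add]
    rw [ht]; exact h4 _ _ _ _
  have b1 : ‖toE ((((1 : Matrix (Fin n) (Fin n) ℂ) + s • Ahat)⁻¹ *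
      ((1 : Matrix (Fin n) (Fin n) ℂ) - s • Ahat)) *ᵥ (u - x))‖ = ‖toE (u - x)‖ :=
    cayley_norm Ahat hAhat c (u - x)
  have b2 : ‖toE (((1 : Matrix (Fin n) (Fin n) ℂ) + s • Ahat)⁻¹ *ᵥ
      ((-(Complex.I * (τ : ℂ))) • b))‖ ≤ τ * ‖toE b‖ := by
    refine le_trans (inv_bound Ahat hAhat c _) ?_
    have : toE ((-(Complex.I * (τ : ℂ))) • b) = (-(Complex.I * (τ : ℂ))) • toE b := by
      simp [toE, WithLp.equiv_symm_apply, WithLp.toLp_smul]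
    rw [this, norm_smul, norm_neg, norm_mul, Complex.norm_I, one_mul, Complex.norm_real,
      Real.norm_eq_abs, abs_of_pos hτ]
  have hAsw : ∀ w : Fin n → ℂ, ‖toE ((Ahat - A) *ᵥ w)‖ ≤ C * ‖toE w‖ := by
    intro w
    have h := hbound w
    rw [euclNorm_eq, euclNorm_eq] at h
    have : (Ahat - A) *ᵥ w = -((A - Ahat) *ᵥ w) := by
      rw [← Matrix.neg_mulVec, neg_sub]
    rw [this]
    have hneg : toE (-((A - Ahat) *ᵥ w)) = -toE ((A - Ahat) *ᵥ w) := by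
      simp [toE, WithLp.equiv_symm_apply, WithLp.toLp_neg]
    rw [hneg, norm_neg]
    exact h
  have b34 : ∀ w : Fin n → ℂ, ‖toE (((1 : Matrix (Fin n) (Fin n) ℂ) + s • Ahat)⁻¹ *ᵥ
      ((-s) • ((Ahat - A) *ᵥ w)))‖ ≤ (τ / 2) * (C * ‖toE w‖) := by
    intro w
    refine le_trans (inv_bound Ahat hAhat c _) ?_
    have hsm : toE ((-s) • ((Ahat - A) *ᵥ w)) = (-s) • toE ((Ahat - A) *ᵥ w) := by
      simp [toE, WithLp.equiv_symm_apply, WithLp.toLp_smul]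
    rw [hsm, norm_smul]
    have hns : ‖-s‖ = τ / 2 := by
      rw [norm_neg, hs, norm_mul, Complex.norm_I, one_mul, Complex.norm_real,
        Real.norm_eq_abs, hc2, abs_of_pos (by positivity)]
    rw [hns]
    exact mul_le_mul_of_nonneg_left (hAsw w) (by positivity)
  rw [euclNorm_eq, euclNorm_eq, euclNorm_eq, euclNorm_eq, euclNorm_eq, he']
  have hmain := hnorm4 ((((1 : Matrix (Fin n) (Fin n) ℂ) + s • Ahat)⁻¹ *
      ((1 : Matrix (Fin n) (Fin n) ℂ) - s • Ahat)) *ᵥ (u - x))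
    (((1 : Matrix (Fin n) (Fin n) ℂ) + s • Ahat)⁻¹ *ᵥ ((-(Complex.I * (τ : ℂ))) • b))
    (((1 : Matrix (Fin n) (Fin n) ℂ) + s • Ahat)⁻¹ *ᵥ ((-s) • ((Ahat - A) *ᵥ x)))
    (((1 : Matrix (Fin n) (Fin n) ℂ) + s • Ahat)⁻¹ *ᵥ ((-s) • ((Ahat - A) *ᵥ x')))
  have hb3 := b34 x
  have hb4 := b34 x'
  have hring : τ / 2 * (C * ‖toE x‖) + τ / 2 * (C * ‖toE x'‖)
      = c * C * (‖toE x‖ + ‖toE x'‖) := by rw [hc2]; ring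
  linarith [hmain, b1, b2, hb3, hb4, hring]
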